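/- Coverage of the Pooling CDFs method, upper bound: Suppose the groups Z̃_1,…,Z̃_{K+1} satisfy hierarchical exchangeability, a measurable score function s is fitted on training groups Z̃_1,…,Z̃_{K₀}, the Pooling CDFs prediction set is Ĉ(x) = {y : s(x,y) ≤ T} with T = inf{t : (1/K₁) Σ_{k=K₀+1}^{K} (1/N_k) Σ_{i=1}^{N_k} 1{s(Z_{k,i}) ≤ t} ≥ 1−α} (K₁ = K − K₀), the test point is (X_test, Y_test) = Z_{K+1,1}, and the scores s(Z_{k,i}) for calibration and test groups are almost surely distinct across distinct groups. Then P(Y_test ∈ Ĉ(X_test)) ≤ 1 − α + (1+α)/(K₁+1). -/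

import Mathlib

open MeasureTheory ProbabilityTheory
open scoped ENNReal

noncomputable section

/-- Extend a permutation of `Fin m` to `ℕ` by the identity outside `{0, …, m-1}`. -/
def permExt {m : ℕ} (σ : Equiv.Perm (Fin m)) : ℕ → ℕ :=
  fun i => if h : i < m then (σ ⟨i, h⟩ : ℕ) else i

/-- The representation of the groups `0, …, L-1` of a hierarchical data set:
group `k` is recorded as the pair of its size `N k ω` and its sequence of observations. -/
def hierData {Ω 𝒵 : Type*} (L : ℕ) (N : ℕ → Ω → ℕ) (Z : ℕ → ℕ → Ω → 𝒵) :
    Ω → Fin L → ℕ × (ℕ → 𝒵) :=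
  fun ω k => (N k.1 ω, fun i => Z k.1 i ω)

/-- Hierarchical exchangeability (Definition 1.1) of the groups `0, …, L-1`:
(i) the groups are exchangeable with each other, and (ii) for each `k` and each `m`
with `P(N_k = m) > 0`, conditionally on `N_k = m` the first `m` observations within
group `k` are exchangeable. -/
def HierExch {Ω 𝒵 : Type*} [MeasurableSpace Ω] [MeasurableSpace 𝒵] (L : ℕ)
    (P : Measure Ω) (N : ℕ → Ω → ℕ) (Z : ℕ → ℕ → Ω → 𝒵) : Prop :=
  (∀ σ : Equiv.Perm (Fin L),
      Measure.map (fun ω => fun k : Fin L => hierData L N Z ω (σ k)) P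
        = Measure.map (hierData L N Z) P) ∧
  (∀ k, k < L → ∀ m : ℕ, 0 < P {ω | N k ω = m} → ∀ σ : Equiv.Perm (Fin m),
      Measure.map
          (hierData L N fun k' i => if k' = k then Z k' (permExt σ i) else Z k' i)
          (ProbabilityTheory.cond P {ω | N k ω = m})
        = Measure.map (hierData L N Z) (ProbabilityTheory.cond P {ω | N k ω = m}))

/-- The `(1-β)`-quantile `Q_{1-β}(μ) = inf {t : μ((-∞, t]) ≥ 1-β}` of a distribution `μ`
on the extended real line. -/
def erealQuantile (β : ℝ) (μ : Measure EReal) : EReal :=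
  sInf {t : EReal | ENNReal.ofReal β ≤ μ (Set.Iic t)}

/-- The Pooling-CDFs threshold: the `(1-α)`-quantile of the pooled empirical distribution
`Σ_{k=K₀}^{K-1} Σ_{i<n k} (1/(K₁·(n k))) δ_{sc k i}`, where `K₁ = K - K₀`. -/
def poolThreshold (α : ℝ) (K₀ K : ℕ) (n : ℕ → ℕ) (sc : ℕ → ℕ → ℝ) : EReal :=
  erealQuantile (1 - α)
    (∑ k ∈ Finset.Ico K₀ K, ∑ i ∈ Finset.range (n k),
      (((K - K₀ : ℕ) : ℝ≥0∞) * (n k : ℝ≥0∞))⁻¹ • Measure.dirac ((sc k i : EReal)))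


lemma measurable_comp_nat {β : Type*} [MeasurableSpace β] {n : β → ℕ} (hn : Measurable n)
    {F : ℕ → β → ℝ≥0∞} (hF : ∀ m, Measurable (F m)) : Measurable fun b => F (n b) b := by
  have h : (fun b => F (n b) b)
      = fun b => ∑' m, Set.indicator {b | n b = m} (fun b => F m b) b := by
    funext b
    rw [tsum_eq_single (n b)]
    · exact (Set.indicator_of_mem (by simp : b ∈ {b' | n b' = n b}) _).symm
    · intro m hm
      exact Set.indicator_of_notMem (by simpa using fun h => (hm h.symm).elim) _
  rw [h]
  exact Measurable.ennreal_tsum fun m =>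
    (hF m).indicator (hn (measurableSet_singleton m))

lemma det_lemma (T : ℕ) (hT : 2 ≤ T) (J : Finset ℕ)
    (n : ℕ → ℕ) (hn : ∀ j ∈ J, 1 ≤ n j) (s : ℕ → ℕ → ℝ)
    (hd : ∀ j ∈ J, ∀ j' ∈ J, j ≠ j' → ∀ i < n j, ∀ i' < n j', s j i ≠ s j' i')
    (α : ℝ) (hα₁ : α < 1)
    (V : ℕ → ℕ → ℝ≥0∞)
    (hV : ∀ j ∈ J, ∀ i, V j i = ∑ k ∈ J.erase j, (((T - 1 : ℕ) : ℝ≥0∞) * n k)⁻¹ *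
      ((Finset.range (n k)).filter fun i' => s k i' < s j i).card) :
    (T : ℝ≥0∞)⁻¹ * ∑ j ∈ J, ((n j : ℝ≥0∞))⁻¹ *
      (((Finset.range (n j)).filter fun i => V j i < ENNReal.ofReal (1 - α)).card)
      ≤ ENNReal.ofReal (1 - α + (1 + α) / T) := by
  have hT1 : ((T - 1 : ℕ) : ℝ≥0∞) ≠ 0 := by
    simp only [ne_eq, Nat.cast_eq_zero]; omega
  have hT1top : ((T - 1 : ℕ) : ℝ≥0∞) ≠ ⊤ := ENNReal.natCast_ne_top _
  set c' : ℝ≥0∞ := ((T - 1 : ℕ) : ℝ≥0∞) * ENNReal.ofReal (1 - α) + 1 with hc'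
  set Glt : ℝ → ℝ≥0∞ := fun x => ∑ k ∈ J, ((n k : ℝ≥0∞))⁻¹ *
      (((Finset.range (n k)).filter fun i' => s k i' < x).card) with hGlt
  have hterm_le_one : ∀ j ∈ J, ∀ x : ℝ, ((n j : ℝ≥0∞))⁻¹ *
      (((Finset.range (n j)).filter fun i' => s j i' < x).card) ≤ 1 := by
    intro j hj x
    calc ((n j : ℝ≥0∞))⁻¹ * (((Finset.range (n j)).filter fun i' => s j i' < x).card)
        ≤ ((n j : ℝ≥0∞))⁻¹ * (n j : ℝ≥0∞) := by
          gcongr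
          exact_mod_cast (Finset.card_filter_le _ _).trans (by simp)
      _ = 1 := ENNReal.inv_mul_cancel
          (Nat.cast_ne_zero.mpr (Nat.one_le_iff_ne_zero.mp (hn j hj)))
          (ENNReal.natCast_ne_top _)
  -- Step 1: V j i < ofReal (1-α) implies Glt (s j i) < c'
  have step1 : ∀ j ∈ J, ∀ i, V j i < ENNReal.ofReal (1 - α) → Glt (s j i) < c' := by
    intro j hj i hVi
    have hsplit : ∑ k ∈ J.erase j, ((n k : ℝ≥0∞))⁻¹ *
        (((Finset.range (n k)).filter fun i' => s k i' < s j i).card)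
        = ((T - 1 : ℕ) : ℝ≥0∞) * V j i := by
      rw [hV j hj i, Finset.mul_sum]
      refine Finset.sum_congr rfl fun k hk => ?_
      rw [ENNReal.mul_inv (Or.inl hT1) (Or.inl hT1top), ← mul_assoc, ← mul_assoc,
        ENNReal.mul_inv_cancel hT1 hT1top, one_mul]
    have h2 : ∑ k ∈ J.erase j, ((n k : ℝ≥0∞))⁻¹ *
        (((Finset.range (n k)).filter fun i' => s k i' < s j i).card)
        < ((T - 1 : ℕ) : ℝ≥0∞) * ENNReal.ofReal (1 - α) := by
      rw [hsplit]
      exact ENNReal.mul_lt_mul_right hT1 hT1top hVi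
    have h3 : Glt (s j i) = (∑ k ∈ J.erase j, ((n k : ℝ≥0∞))⁻¹ *
        (((Finset.range (n k)).filter fun i' => s k i' < s j i).card))
        + ((n j : ℝ≥0∞))⁻¹ *
        (((Finset.range (n j)).filter fun i' => s j i' < s j i).card) := by
      rw [hGlt]
      exact (Finset.sum_erase_add J _ hj).symm
    calc Glt (s j i) ≤ (∑ k ∈ J.erase j, ((n k : ℝ≥0∞))⁻¹ *
          (((Finset.range (n k)).filter fun i' => s k i' < s j i).card)) + 1 := by
          rw [h3]; exact add_le_add_right (hterm_le_one j hj _) _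
      _ < c' := by
          rw [hc']
          exact ENNReal.add_lt_add_right ENNReal.one_ne_top h2
  -- Step 2
  have step2 : ∑ j ∈ J, ((n j : ℝ≥0∞))⁻¹ *
      (((Finset.range (n j)).filter fun i => V j i < ENNReal.ofReal (1 - α)).card)
      ≤ ∑ j ∈ J, ((n j : ℝ≥0∞))⁻¹ *
      (((Finset.range (n j)).filter fun i => Glt (s j i) < c').card) := by
    refine Finset.sum_le_sum fun j hj => mul_le_mul_right ?_ _
    refine Nat.cast_le.2 (Finset.card_le_card fun i hi => ?_)
    simp only [Finset.mem_filter, Finset.mem_range] at hi ⊢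
    exact ⟨hi.1, step1 j hj i hi.2⟩
  -- Step 3
  have step3 : ∑ j ∈ J, ((n j : ℝ≥0∞))⁻¹ *
      (((Finset.range (n j)).filter fun i => Glt (s j i) < c').card) ≤ c' + 1 := by
    by_cases hne : ∀ j ∈ J, ((Finset.range (n j)).filter fun i => Glt (s j i) < c') = ∅
    · calc ∑ j ∈ J, ((n j : ℝ≥0∞))⁻¹ *
          (((Finset.range (n j)).filter fun i => Glt (s j i) < c').card)
          = 0 := Finset.sum_eq_zero fun j hj => by rw [hne j hj]; simp
        _ ≤ c' + 1 := zero_le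
    · push_neg at hne
      obtain ⟨j₀, hj₀, hQj₀⟩ := hne
      have hPne : (J.sigma fun j =>
          (Finset.range (n j)).filter fun i => Glt (s j i) < c').Nonempty := by
        obtain ⟨i₀, hi₀⟩ := hQj₀
        exact ⟨⟨j₀, i₀⟩, Finset.mem_sigma.2 ⟨hj₀, hi₀⟩⟩
      obtain ⟨p, hp, hmax⟩ := Finset.exists_max_image _ (fun p : Σ _ : ℕ, ℕ => s p.1 p.2) hPne
      rw [Finset.mem_sigma] at hp
      obtain ⟨hpJ, hpQ⟩ := hp
      rw [Finset.mem_filter, Finset.mem_range] at hpQ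
      set v : ℝ := s p.1 p.2 with hv
      have hGv : Glt v < c' := hpQ.2
      have hsub : ∀ j ∈ J, ((Finset.range (n j)).filter fun i => Glt (s j i) < c')
          ⊆ ((Finset.range (n j)).filter fun i => s j i < v)
          ∪ ((Finset.range (n j)).filter fun i => s j i = v) := by
        intro j hj i hi
        have hle : s j i ≤ v := hmax ⟨j, i⟩ (Finset.mem_sigma.2 ⟨hj, hi⟩)
        rw [Finset.mem_filter, Finset.mem_range] at hi
        rw [Finset.mem_union, Finset.mem_filter, Finset.mem_filter,
          Finset.mem_range]
        rcases lt_or_eq_of_le hle with h | h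
        · exact Or.inl ⟨hi.1, h⟩
        · exact Or.inr ⟨hi.1, h⟩
      calc ∑ j ∈ J, ((n j : ℝ≥0∞))⁻¹ *
            (((Finset.range (n j)).filter fun i => Glt (s j i) < c').card)
          ≤ ∑ j ∈ J, (((n j : ℝ≥0∞))⁻¹ *
              (((Finset.range (n j)).filter fun i => s j i < v).card)
            + ((n j : ℝ≥0∞))⁻¹ *
              (((Finset.range (n j)).filter fun i => s j i = v).card)) := by
            refine Finset.sum_le_sum fun j hj => ?_
            rw [← mul_add]
            refine mul_le_mul_right ?_ _
            have h1 := (Finset.card_le_card (hsub j hj)).trans (Finset.card_union_le _ _)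
            exact_mod_cast h1
        _ = (∑ j ∈ J, ((n j : ℝ≥0∞))⁻¹ *
              (((Finset.range (n j)).filter fun i => s j i < v).card))
            + ∑ j ∈ J, ((n j : ℝ≥0∞))⁻¹ *
              (((Finset.range (n j)).filter fun i => s j i = v).card) :=
            Finset.sum_add_distrib
        _ ≤ c' + 1 := by
            refine add_le_add (le_of_lt hGv) ?_
            rw [Finset.sum_eq_single_of_mem p.1 hpJ]
            · calc ((n p.1 : ℝ≥0∞))⁻¹ *
                  (((Finset.range (n p.1)).filter fun i => s p.1 i = v).card)
                  ≤ ((n p.1 : ℝ≥0∞))⁻¹ * (n p.1 : ℝ≥0∞) := by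
                    refine mul_le_mul_right ?_ _
                    exact_mod_cast (Finset.card_filter_le _ _).trans (by simp)
                _ = 1 := ENNReal.inv_mul_cancel
                    (Nat.cast_ne_zero.mpr (Nat.one_le_iff_ne_zero.mp (hn _ hpJ)))
                    (ENNReal.natCast_ne_top _)
            · intro j hj hnej
              have hemp : ((Finset.range (n j)).filter fun i => s j i = v) = ∅ := by
                rw [Finset.filter_eq_empty_iff]
                intro i hi
                rw [Finset.mem_range] at hi
                exact hd j hj p.1 hpJ hnej i hi p.2 hpQ.1
              rw [hemp]; simp
  -- final arithmetic
  have hfinal : (T : ℝ≥0∞)⁻¹ * (c' + 1) ≤ ENNReal.ofReal (1 - α + (1 + α) / T) := by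
    have hTR : (0:ℝ) < (T:ℝ) := by positivity
    have h1α : (0:ℝ) ≤ 1 - α := by linarith
    have hc'' : c' + 1 = ENNReal.ofReal (((T - 1 : ℕ) : ℝ) * (1 - α) + 2) := by
      rw [ENNReal.ofReal_add (by positivity) (by norm_num),
        ENNReal.ofReal_mul (by positivity), ENNReal.ofReal_natCast, hc', add_assoc]
      norm_num
    rw [hc'', ← ENNReal.ofReal_natCast T, ← ENNReal.ofReal_inv_of_pos hTR,
      ← ENNReal.ofReal_mul (by positivity)]
    refine ENNReal.ofReal_le_ofReal ?_
    have hT1R : ((T - 1 : ℕ) : ℝ) = (T : ℝ) - 1 := by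
      have : (1:ℕ) ≤ T := by omega
      push_cast [this]
      ring
    have hmul : (1 - α + (1 + α) / (T:ℝ)) * T = (1 - α) * T + (1 + α) := by
      field_simp
    rw [hT1R, inv_mul_eq_div, div_le_iff₀ hTR, hmul]
    ring_nf
    linarith
  calc (T : ℝ≥0∞)⁻¹ * ∑ j ∈ J, ((n j : ℝ≥0∞))⁻¹ *
      (((Finset.range (n j)).filter fun i => V j i < ENNReal.ofReal (1 - α)).card)
      ≤ (T : ℝ≥0∞)⁻¹ * (c' + 1) := mul_le_mul_right (step2.trans step3) _
    _ ≤ ENNReal.ofReal (1 - α + (1 + α) / T) := hfinal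


section PC

variable {𝒵 : Type*} [MeasurableSpace 𝒵]

/-- Index `k` as an element of `Fin (K+1)` (via `mod`). -/
def pcIdx (K : ℕ) (k : ℕ) : Fin (K + 1) := ⟨k % (K + 1), Nat.mod_lt _ (Nat.succ_pos K)⟩

def pcNN (K : ℕ) (d : Fin (K + 1) → ℕ × (ℕ → 𝒵)) (k : ℕ) : ℕ := (d (pcIdx K k)).1

def pcZ (K : ℕ) (d : Fin (K + 1) → ℕ × (ℕ → 𝒵)) (k i : ℕ) : 𝒵 := (d (pcIdx K k)).2 i

def pcTrain (K K₀ : ℕ) (d : Fin (K + 1) → ℕ × (ℕ → 𝒵)) : Fin K₀ → ℕ × (ℕ → 𝒵) :=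
  fun k' => d (pcIdx K k'.1)

def pcSc (K K₀ : ℕ) (A : (Fin K₀ → ℕ × (ℕ → 𝒵)) → 𝒵 → ℝ)
    (d : Fin (K + 1) → ℕ × (ℕ → 𝒵)) (k i : ℕ) : ℝ :=
  A (pcTrain K K₀ d) (pcZ K d k i)

def pcPhi (K K₀ : ℕ) (A : (Fin K₀ → ℕ × (ℕ → 𝒵)) → 𝒵 → ℝ) (j i : ℕ)
    (d : Fin (K + 1) → ℕ × (ℕ → 𝒵)) : ℝ≥0∞ :=
  ∑ k ∈ (Finset.Ico K₀ (K + 1)).erase j,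
    (((K - K₀ : ℕ) : ℝ≥0∞) * (pcNN K d k : ℝ≥0∞))⁻¹ *
      (((Finset.range (pcNN K d k)).filter
        fun i' => pcSc K K₀ A d k i' < pcSc K K₀ A d j i).card : ℝ≥0∞)

lemma measurable_pcNN (K k : ℕ) : Measurable fun d : Fin (K + 1) → ℕ × (ℕ → 𝒵) => pcNN K d k :=
  (measurable_pi_apply _).fst

lemma measurable_pcZ (K k i : ℕ) : Measurable fun d : Fin (K + 1) → ℕ × (ℕ → 𝒵) => pcZ K d k i :=
  (measurable_pi_apply i).comp (measurable_pi_apply (pcIdx K k)).snd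

lemma measurable_pcTrain (K K₀ : ℕ) : Measurable (pcTrain (𝒵 := 𝒵) K K₀) :=
  measurable_pi_lambda _ fun _ => measurable_pi_apply _

lemma measurable_pcSc {K K₀ : ℕ} {A : (Fin K₀ → ℕ × (ℕ → 𝒵)) → 𝒵 → ℝ}
    (hA : Measurable fun p : (Fin K₀ → ℕ × (ℕ → 𝒵)) × 𝒵 => A p.1 p.2) (k i : ℕ) :
    Measurable fun d : Fin (K + 1) → ℕ × (ℕ → 𝒵) => pcSc K K₀ A d k i :=
  hA.comp ((measurable_pcTrain K K₀).prodMk (measurable_pcZ K k i))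

lemma measurable_pcPhi {K K₀ : ℕ} {A : (Fin K₀ → ℕ × (ℕ → 𝒵)) → 𝒵 → ℝ}
    (hA : Measurable fun p : (Fin K₀ → ℕ × (ℕ → 𝒵)) × 𝒵 => A p.1 p.2) (j i : ℕ) :
    Measurable (pcPhi K K₀ A j i) := by
  refine Finset.measurable_sum _ fun k hk => ?_
  refine measurable_comp_nat (measurable_pcNN K k)
    (F := fun m d => (((K - K₀ : ℕ) : ℝ≥0∞) * (m : ℝ≥0∞))⁻¹ *
      (((Finset.range m).filter fun i' => pcSc K K₀ A d k i' < pcSc K K₀ A d j i).card : ℝ≥0∞))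
    fun m => ?_
  refine Measurable.const_mul ?_ _
  have h : (fun d : Fin (K + 1) → ℕ × (ℕ → 𝒵) =>
      (((Finset.range m).filter fun i' => pcSc K K₀ A d k i' < pcSc K K₀ A d j i).card : ℝ≥0∞))
      = fun d => ∑ i' ∈ Finset.range m,
        if pcSc K K₀ A d k i' < pcSc K K₀ A d j i then (1 : ℝ≥0∞) else 0 := by
    funext d
    rw [Finset.card_filter]
    push_cast
    rfl
  rw [h]
  refine Finset.measurable_sum _ fun i' _ => Measurable.ite ?_ measurable_const measurable_const
  exact measurableSet_lt (measurable_pcSc hA k i') (measurable_pcSc hA j i)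

set_option linter.unusedSectionVars false

section HierId

variable {Ω : Type*} {K K₀ : ℕ} {N : ℕ → Ω → ℕ} {Z : ℕ → ℕ → Ω → 𝒵}

lemma pcIdx_eq (K k : ℕ) (hk : k < K + 1) : (pcIdx K k : ℕ) = k := by
  simp [pcIdx, Nat.mod_eq_of_lt hk]

lemma pcNN_hierData (ω : Ω) (k : ℕ) (hk : k < K + 1) :
    pcNN K (hierData (K + 1) N Z ω) k = N k ω := by
  simp [pcNN, hierData, pcIdx_eq K k hk]

lemma pcZ_hierData (ω : Ω) (k i : ℕ) (hk : k < K + 1) :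
    pcZ K (hierData (K + 1) N Z ω) k i = Z k i ω := by
  simp [pcZ, hierData, pcIdx_eq K k hk]

lemma pcTrain_hierData (ω : Ω) (hK₀ : K₀ < K + 1) :
    pcTrain K K₀ (hierData (K + 1) N Z ω) = hierData K₀ N Z ω := by
  funext k'
  have hk' : (k' : ℕ) < K + 1 := lt_trans k'.2 hK₀
  simp [pcTrain, hierData, pcIdx_eq K _ hk']

lemma pcSc_hierData {A : (Fin K₀ → ℕ × (ℕ → 𝒵)) → 𝒵 → ℝ} (ω : Ω) (k i : ℕ)
    (hK₀ : K₀ < K + 1) (hk : k < K + 1) :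
    pcSc K K₀ A (hierData (K + 1) N Z ω) k i = A (hierData K₀ N Z ω) (Z k i ω) := by
  rw [pcSc, pcTrain_hierData ω hK₀, pcZ_hierData ω k i hk]

lemma pcPhi_hierData {A : (Fin K₀ → ℕ × (ℕ → 𝒵)) → 𝒵 → ℝ} (ω : Ω) (j i : ℕ)
    (hK₀ : K₀ < K + 1) (hj : j < K + 1) :
    pcPhi K K₀ A j i (hierData (K + 1) N Z ω)
      = ∑ k ∈ (Finset.Ico K₀ (K + 1)).erase j,
        (((K - K₀ : ℕ) : ℝ≥0∞) * (N k ω : ℝ≥0∞))⁻¹ *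
          (((Finset.range (N k ω)).filter fun i' =>
            A (hierData K₀ N Z ω) (Z k i' ω) < A (hierData K₀ N Z ω) (Z j i ω)).card : ℝ≥0∞) := by
  rw [pcPhi]
  refine Finset.sum_congr rfl fun k hk => ?_
  have hkK : k < K + 1 := (Finset.mem_Ico.1 (Finset.mem_of_mem_erase hk)).2
  rw [pcNN_hierData ω k hkK]
  simp only [show ∀ i', pcSc K K₀ A (hierData (K + 1) N Z ω) k i'
      = A (hierData K₀ N Z ω) (Z k i' ω) from fun i' => pcSc_hierData ω k i' hK₀ hkK,
    pcSc_hierData ω j i hK₀ hj]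

end HierId

end PC

/-- If the test score is below the pooled threshold, then the pooled strictly-below mass
at the test score is `< 1 - α`. -/
lemma pool_mass_lt (α : ℝ) (hα₁ : α < 1) (K₀ K : ℕ) (n : ℕ → ℕ) (sc : ℕ → ℕ → ℝ)
    (h : (sc K 0 : EReal) ≤ poolThreshold α K₀ K n sc) :
    ∑ k ∈ Finset.Ico K₀ K, (((K - K₀ : ℕ) : ℝ≥0∞) * (n k : ℝ≥0∞))⁻¹ *
      (((Finset.range (n k)).filter fun i => sc k i < sc K 0).card : ℝ≥0∞)
      < ENNReal.ofReal (1 - α) := by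
  classical
  by_contra hcon
  push_neg at hcon
  set F : Finset ℝ := (Finset.Ico K₀ K).biUnion (fun k =>
    ((Finset.range (n k)).filter fun i => sc k i < sc K 0).image (fun i => sc k i)) with hF
  have hFne : F.Nonempty := by
    rw [Finset.nonempty_iff_ne_empty]
    intro hFe
    have hS0 : ∑ k ∈ Finset.Ico K₀ K, (((K - K₀ : ℕ) : ℝ≥0∞) * (n k : ℝ≥0∞))⁻¹ *
        (((Finset.range (n k)).filter fun i => sc k i < sc K 0).card : ℝ≥0∞) = 0 := by
      refine Finset.sum_eq_zero fun k hk => ?_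
      have himg : ((Finset.range (n k)).filter fun i => sc k i < sc K 0) = ∅ := by
        rw [Finset.eq_empty_iff_forall_notMem]
        intro i hi
        have hmem : sc k i ∈ F :=
          Finset.mem_biUnion.2 ⟨k, hk, Finset.mem_image.2 ⟨i, hi, rfl⟩⟩
        rw [hFe] at hmem
        exact absurd hmem (Finset.notMem_empty _)
      rw [himg]
      simp
    rw [hS0] at hcon
    exact (ENNReal.ofReal_pos.2 (by linarith : (0:ℝ) < 1 - α)).ne' (le_zero_iff.1 hcon)
  obtain ⟨t₀, ht₀F, ht₀max⟩ : ∃ t₀ ∈ F, ∀ x ∈ F, x ≤ t₀ :=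
    ⟨F.max' hFne, F.max'_mem hFne, fun x hx => F.le_max' x hx⟩
  have ht₀lt : t₀ < sc K 0 := by
    rw [hF] at ht₀F
    simp only [Finset.mem_biUnion, Finset.mem_image, Finset.mem_filter,
      Finset.mem_range] at ht₀F
    obtain ⟨k, hk, i, ⟨hi, hlt⟩, heq⟩ := ht₀F
    exact heq ▸ hlt
  have hμ : ENNReal.ofReal (1 - α) ≤
      (∑ k ∈ Finset.Ico K₀ K, ∑ i ∈ Finset.range (n k),
        (((K - K₀ : ℕ) : ℝ≥0∞) * (n k : ℝ≥0∞))⁻¹ • Measure.dirac ((sc k i : ℝ) : EReal))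
      (Set.Iic ((t₀ : ℝ) : EReal)) := by
    refine hcon.trans ?_
    rw [Measure.finset_sum_apply]
    refine Finset.sum_le_sum fun k hk => ?_
    rw [Measure.finset_sum_apply, Finset.card_filter]
    push_cast [apply_ite (Nat.cast : ℕ → ℝ≥0∞)]
    rw [Finset.mul_sum]
    refine Finset.sum_le_sum fun i hi => ?_
    simp only [Pi.smul_apply, smul_eq_mul, Measure.smul_apply,
      Measure.dirac_apply' _ measurableSet_Iic]
    by_cases hp : sc k i < sc K 0
    · have hmem : sc k i ∈ F :=
        Finset.mem_biUnion.2 ⟨k, hk, Finset.mem_image.2 ⟨i, Finset.mem_filter.2 ⟨hi, hp⟩, rfl⟩⟩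
      have hle : sc k i ≤ t₀ := ht₀max _ hmem
      have hind : (Set.Iic ((t₀ : ℝ) : EReal)).indicator (1 : EReal → ℝ≥0∞)
          ((sc k i : ℝ) : EReal) = 1 := by
        rw [Set.indicator_of_mem (by simpa [Set.mem_Iic] using EReal.coe_le_coe_iff.2 hle)]
        rfl
      rw [hind]
      simp [hp]
    · simp [hp]
  have hle2 : poolThreshold α K₀ K n sc ≤ ((t₀ : ℝ) : EReal) := by
    rw [poolThreshold, erealQuantile]
    exact sInf_le hμ
  have hfin := h.trans hle2
  rw [EReal.coe_le_coe_iff] at hfin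
  linarith

/-- **Proposition (Coverage of Pooling CDFs, upper bound).**
Under hierarchical exchangeability, if moreover the scores of observations lying in
distinct groups (among the calibration and test groups) are almost surely distinct, the
Pooling-CDFs prediction set satisfies `P(Y_test ∈ Ĉ(X_test)) ≤ 1 - α + (1+α)/(K₁+1)`. -/
theorem pooling_cdfs_coverage_upper
    {𝒳 𝒴 Ω : Type*} [MeasurableSpace 𝒳] [MeasurableSpace 𝒴] [MeasurableSpace Ω]
    (P : Measure Ω) [IsProbabilityMeasure P]
    (K K₀ : ℕ) (hK₀ : K₀ < K)
    (N : ℕ → Ω → ℕ) (Z : ℕ → ℕ → Ω → 𝒳 × 𝒴)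
    (hN : ∀ k ω, 1 ≤ N k ω)
    (hNmeas : ∀ k, Measurable (N k)) (hZmeas : ∀ k i, Measurable (Z k i))
    (hexch : HierExch (K + 1) P N Z)
    (α : ℝ) (hα₀ : 0 < α) (hα₁ : α < 1)
    (A : (Fin K₀ → ℕ × (ℕ → 𝒳 × 𝒴)) → 𝒳 × 𝒴 → ℝ)
    (hA : Measurable fun p : (Fin K₀ → ℕ × (ℕ → 𝒳 × 𝒴)) × (𝒳 × 𝒴) => A p.1 p.2)
    (hdist : ∀ᵐ ω ∂P, ∀ k k', K₀ ≤ k → k ≤ K → K₀ ≤ k' → k' ≤ K → k ≠ k' →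
      ∀ i < N k ω, ∀ i' < N k' ω,
        A (hierData K₀ N Z ω) (Z k i ω) ≠ A (hierData K₀ N Z ω) (Z k' i' ω)) :
    P {ω | (A (hierData K₀ N Z ω) (Z K 0 ω) : EReal)
        ≤ poolThreshold α K₀ K (fun k => N k ω)
            fun k i => A (hierData K₀ N Z ω) (Z k i ω)}
      ≤ ENNReal.ofReal (1 - α + (1 + α) / (((K - K₀ : ℕ) : ℝ) + 1)) := by
  classical
  obtain ⟨hex1, hex2⟩ := hexch
  set c : ℝ≥0∞ := ENNReal.ofReal (1 - α) with hc
  set J : Finset ℕ := Finset.Ico K₀ (K + 1) with hJdef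
  set T : ℕ := K - K₀ + 1 with hTdef
  have hT2 : 2 ≤ T := by omega
  have hK₀1 : K₀ < K + 1 := by omega
  have hf : Measurable (hierData (K + 1) N Z) :=
    measurable_pi_lambda _ fun k =>
      (hNmeas k.1).prodMk (measurable_pi_lambda _ fun i => hZmeas k.1 i)
  set B : ℕ → ℕ → Set Ω :=
    fun j i => {ω | pcPhi K K₀ A j i (hierData (K + 1) N Z ω) < c} with hBdef
  have hSmeas : ∀ j i, MeasurableSet {d : Fin (K + 1) → ℕ × (ℕ → 𝒳 × 𝒴) |
      pcPhi K K₀ A j i d < c} :=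
    fun j i => measurableSet_lt (measurable_pcPhi hA j i) measurable_const
  have hBmeas : ∀ j i, MeasurableSet (B j i) := fun j i => hf (hSmeas j i)
  -- Step 0 : inclusion of the coverage event
  have step0 : P {ω | (A (hierData K₀ N Z ω) (Z K 0 ω) : EReal)
        ≤ poolThreshold α K₀ K (fun k => N k ω)
            fun k i => A (hierData K₀ N Z ω) (Z k i ω)} ≤ P (B K 0) := by
    refine measure_mono fun ω hω => ?_
    have h1 := pool_mass_lt α hα₁ K₀ K (fun k => N k ω)
      (fun k i => A (hierData K₀ N Z ω) (Z k i ω)) hω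
    show pcPhi K K₀ A K 0 (hierData (K + 1) N Z ω) < c
    rw [pcPhi_hierData ω K 0 hK₀1 (by omega), hc]
    have herase : (Finset.Ico K₀ (K + 1)).erase K = Finset.Ico K₀ K := by
      ext x
      simp only [Finset.mem_erase, Finset.mem_Ico]
      omega
    rw [herase]
    exact h1
  -- Step A : exchangeability across groups
  have stepA : ∀ j ∈ J, P (B j 0) = P (B K 0) := by
    intro j hj
    rw [hJdef, Finset.mem_Ico] at hj
    rcases eq_or_ne j K with hjK | hjK
    · rw [hjK]
    have hjlt : j < K + 1 := hj.2
    have hKlt : K < K + 1 := by omega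
    set σ : Equiv.Perm (Fin (K + 1)) := Equiv.swap ⟨j, hjlt⟩ ⟨K, hKlt⟩ with hσ
    set sw : ℕ → ℕ := fun k => if k = j then K else if k = K then j else k with hsw
    have hswlt : ∀ k, k < K + 1 → sw k < K + 1 := by
      intro k hk
      simp only [hsw]
      split_ifs <;> omega
    have hσval : ∀ x : Fin (K + 1), ((σ x : Fin (K + 1)) : ℕ) = sw (x : ℕ) := by
      intro x
      rcases eq_or_ne (x : ℕ) j with hxj | hxj
      · have hx : x = ⟨j, hjlt⟩ := Fin.ext hxj
        rw [hσ, hx, Equiv.swap_apply_left]; simp only [hsw]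
        simp
      rcases eq_or_ne (x : ℕ) K with hxK | hxK
      · have hx : x = ⟨K, hKlt⟩ := Fin.ext hxK
        rw [hσ, hx, Equiv.swap_apply_right]; simp only [hsw]
        simp [Ne.symm hjK]
      · rw [hσ, Equiv.swap_apply_of_ne_of_ne
          (fun h => hxj (by rw [h])) (fun h => hxK (by rw [h]))]
        simp only [hsw]
        simp [hxj, hxK]
    have hswj : sw K = j := by simp only [hsw]; simp [Ne.symm hjK]
    have hkey : ∀ ω, pcPhi K K₀ A K 0 (fun k : Fin (K + 1) => hierData (K + 1) N Z ω (σ k))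
        = pcPhi K K₀ A j 0 (hierData (K + 1) N Z ω) := by
      intro ω
      have hgform : (fun k : Fin (K + 1) => hierData (K + 1) N Z ω (σ k))
          = hierData (K + 1) (fun k => N (sw k)) (fun k i => Z (sw k) i) ω := by
        funext k
        simp only [hierData, hσval k]
      rw [hgform, pcPhi_hierData (N := fun k => N (sw k)) (Z := fun k i => Z (sw k) i)
        ω K 0 hK₀1 (by omega), pcPhi_hierData ω j 0 hK₀1 hjlt]
      have htr : hierData K₀ (fun k => N (sw k)) (fun k i => Z (sw k) i) ω
          = hierData K₀ N Z ω := by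
        funext k'
        have h1 : sw (k' : ℕ) = (k' : ℕ) := by
          have := k'.2
          simp only [hsw]
          split_ifs <;> omega
        simp only [hierData, h1]
      rw [htr, hswj]
      refine Finset.sum_nbij' (fun k => sw k) (fun k => sw k) ?_ ?_ ?_ ?_ ?_
      · intro k hk
        rw [Finset.mem_erase, Finset.mem_Ico] at hk ⊢
        simp only [hsw]
        split_ifs <;> omega
      · intro k hk
        rw [Finset.mem_erase, Finset.mem_Ico] at hk ⊢
        simp only [hsw]
        split_ifs <;> omega
      · intro k hk
        simp only [hsw]
        split_ifs <;> omega
      · intro k hk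
        simp only [hsw]
        split_ifs <;> omega
      · intro k hk
        rfl
    have hg : Measurable fun ω => fun k : Fin (K + 1) => hierData (K + 1) N Z ω (σ k) :=
      measurable_pi_lambda _ fun k =>
        (hNmeas _).prodMk (measurable_pi_lambda _ fun i => hZmeas _ i)
    have hmapg := hex1 σ
    have h2 : P (B j 0) = Measure.map
        (fun ω => fun k : Fin (K + 1) => hierData (K + 1) N Z ω (σ k)) P
        {d | pcPhi K K₀ A K 0 d < c} := by
      rw [Measure.map_apply hg (hSmeas K 0)]
      congr 1
      ext ω
      simp only [Set.mem_preimage, Set.mem_setOf_eq, hBdef, hkey ω]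
    rw [h2, hmapg, Measure.map_apply hf (hSmeas K 0)]
    rfl
  -- the per-group averaged indicator
  set h : ℕ → Ω → ℝ≥0∞ := fun j ω => ((N j ω : ℝ≥0∞))⁻¹ *
    ∑ i ∈ Finset.range (N j ω), (B j i).indicator (fun _ => (1 : ℝ≥0∞)) ω with hhdef
  have hFm : ∀ (j m : ℕ), Measurable fun ω => ((m : ℝ≥0∞))⁻¹ *
      ∑ i ∈ Finset.range m, (B j i).indicator (fun _ => (1 : ℝ≥0∞)) ω := fun j m =>
    Measurable.const_mul
      (Finset.measurable_sum _ fun i _ => measurable_const.indicator (hBmeas j i)) _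
  have hhmeas : ∀ j, Measurable (h j) := fun j =>
    measurable_comp_nat (hNmeas j) (hFm j)
  -- Step B : within-group exchangeability, as an integral identity
  have hjint : ∀ j ∈ J, P (B j 0) = ∫⁻ ω, h j ω ∂P := by
    intro j hj
    rw [hJdef, Finset.mem_Ico] at hj
    have hAm : ∀ m : ℕ, MeasurableSet {ω | N j ω = m} :=
      fun m => hNmeas j (measurableSet_singleton m)
    have hA0 : {ω | N j ω = 0} = ∅ := by
      ext ω
      simp only [Set.mem_setOf_eq, Set.mem_empty_iff_false, iff_false]
      have := hN j ω
      omega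
    -- Step B proper
    have hBm : ∀ m : ℕ, ∀ i, i < m →
        P (B j i ∩ {ω | N j ω = m}) = P (B j 0 ∩ {ω | N j ω = m}) := by
      intro m i him
      rcases eq_or_lt_of_le (zero_le : (0 : ℝ≥0∞) ≤ P {ω | N j ω = m}) with hzero | hpos
      · rw [measure_inter_null_of_null_right _ hzero.symm,
          measure_inter_null_of_null_right _ hzero.symm]
      · set σ2 : Equiv.Perm (Fin m) := Equiv.swap ⟨0, by omega⟩ ⟨i, him⟩ with hσ2
        have hmap := hex2 j (by omega : j < K + 1) m hpos σ2
        have hf' : Measurable (hierData (K + 1) N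
            fun k' i'' => if k' = j then Z k' (permExt σ2 i'') else Z k' i'') :=
          measurable_pi_lambda _ fun k => (hNmeas _).prodMk
            (measurable_pi_lambda _ fun i2 => by
              dsimp only
              split_ifs
              · exact hZmeas _ _
              · exact hZmeas _ _)
        have hperm0 : permExt σ2 0 = i := by
          rw [permExt]
          rcases Nat.eq_zero_or_pos m with hm | hm
          · omega
          · rw [dif_pos (by omega : 0 < m)]
            have : σ2 ⟨0, by omega⟩ = ⟨i, him⟩ := by
              rw [hσ2]
              exact Equiv.swap_apply_left _ _
            rw [this]
        have hkey : ∀ ω, pcPhi K K₀ A j 0 (hierData (K + 1) N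
            (fun k' i'' => if k' = j then Z k' (permExt σ2 i'') else Z k' i'') ω)
            = pcPhi K K₀ A j i (hierData (K + 1) N Z ω) := by
          intro ω
          rw [pcPhi_hierData ω j 0 hK₀1 (by omega), pcPhi_hierData ω j i hK₀1 (by omega)]
          have htr : hierData K₀ N
              (fun k' i'' => if k' = j then Z k' (permExt σ2 i'') else Z k' i'') ω
              = hierData K₀ N Z ω := by
            funext k'
            have hne : ((k' : ℕ) = j) = False := by
              have := k'.2
              simp only [eq_iff_iff, iff_false]
              omega
            simp only [hierData, hne, if_false]
          rw [htr]
          refine Finset.sum_congr rfl fun k hk => ?_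
          have hkj : (k = j) = False := by
            simp only [eq_iff_iff, iff_false]
            exact (Finset.mem_erase.1 hk).1
          simp only [hkj, if_false, eq_self_iff_true, if_true, hperm0]
        have h1 : (P[|{ω | N j ω = m}]) (B j i) = (P[|{ω | N j ω = m}]) (B j 0) := by
          have e1 : B j i = (hierData (K + 1) N
              fun k' i'' => if k' = j then Z k' (permExt σ2 i'') else Z k' i'') ⁻¹'
              {d | pcPhi K K₀ A j 0 d < c} := by
            ext ω
            simp only [Set.mem_preimage, Set.mem_setOf_eq, hBdef, hkey ω]
          rw [e1, ← Measure.map_apply hf' (hSmeas j 0), hmap,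
            Measure.map_apply hf (hSmeas j 0)]
          rfl
        rw [cond_apply (hAm m), cond_apply (hAm m)] at h1
        have hPA : P {ω | N j ω = m} ≠ 0 := hpos.ne'
        have hPAtop : P {ω | N j ω = m} ≠ ⊤ := measure_ne_top P _
        calc P (B j i ∩ {ω | N j ω = m}) = P ({ω | N j ω = m} ∩ B j i) := by
              rw [Set.inter_comm]
          _ = P {ω | N j ω = m} * ((P {ω | N j ω = m})⁻¹ *
              P ({ω | N j ω = m} ∩ B j i)) := by
              rw [← mul_assoc, ENNReal.mul_inv_cancel hPA hPAtop, one_mul]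
          _ = P {ω | N j ω = m} * ((P {ω | N j ω = m})⁻¹ *
              P ({ω | N j ω = m} ∩ B j 0)) := by rw [h1]
          _ = P ({ω | N j ω = m} ∩ B j 0) := by
              rw [← mul_assoc, ENNReal.mul_inv_cancel hPA hPAtop, one_mul]
          _ = P (B j 0 ∩ {ω | N j ω = m}) := by rw [Set.inter_comm]
    -- partition of P (B j 0)
    have hpart : P (B j 0) = ∑' m, P (B j 0 ∩ {ω | N j ω = m}) := by
      have hU : (⋃ m, B j 0 ∩ {ω | N j ω = m}) = B j 0 := by
        ext ω
        simp only [Set.mem_iUnion, Set.mem_inter_iff, Set.mem_setOf_eq]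
        exact ⟨fun ⟨m, hm⟩ => hm.1, fun hb => ⟨N j ω, hb, rfl⟩⟩
      have hdisj : Pairwise (Function.onFun Disjoint fun m => B j 0 ∩ {ω | N j ω = m}) := by
        intro m m' hmm'
        simp only [Function.onFun, Set.disjoint_left]
        rintro ω ⟨-, h1⟩ ⟨-, h2⟩
        exact hmm' (h1.symm.trans h2)
      rw [← measure_iUnion hdisj fun m => (hBmeas j 0).inter (hAm m), hU]
    have hexp : h j = fun ω => ∑' m, Set.indicator {ω' | N j ω' = m}
        (fun ω' => ((m : ℝ≥0∞))⁻¹ *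
          ∑ i ∈ Finset.range m, (B j i).indicator (fun _ => (1 : ℝ≥0∞)) ω') ω := by
      funext ω
      have h0 : (∑' m, Set.indicator {ω' | N j ω' = m}
          (fun ω' => ((m : ℝ≥0∞))⁻¹ *
            ∑ i ∈ Finset.range m, (B j i).indicator (fun _ => (1 : ℝ≥0∞)) ω') ω)
          = Set.indicator {ω' | N j ω' = N j ω}
            (fun ω' => ((N j ω : ℝ≥0∞))⁻¹ *
              ∑ i ∈ Finset.range (N j ω), (B j i).indicator (fun _ => (1 : ℝ≥0∞)) ω') ω :=
        tsum_eq_single _ fun m hm =>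
          Set.indicator_of_notMem (s := {ω' | N j ω' = m})
            (fun hh => hm (Eq.symm hh)) _
      rw [h0, Set.indicator_of_mem (show ω ∈ {ω' | N j ω' = N j ω} from rfl)]
    rw [hpart, hexp, lintegral_tsum fun m => ((hFm j m).indicator (hAm m)).aemeasurable]
    refine tsum_congr fun m => ?_
    rw [lintegral_indicator (hAm m)]
    rcases Nat.eq_zero_or_pos m with hm0 | hmpos
    · subst hm0
      rw [hA0]
      simp
    · rw [lintegral_const_mul _
        (Finset.measurable_sum _ fun i _ => measurable_const.indicator (hBmeas j i)),
        lintegral_finset_sum _ fun i _ => measurable_const.indicator (hBmeas j i)]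
      have hint : ∀ i, ∫⁻ ω in {ω | N j ω = m},
          (B j i).indicator (fun _ => (1 : ℝ≥0∞)) ω ∂P
          = P (B j i ∩ {ω | N j ω = m}) := fun i => by
        rw [lintegral_indicator (hBmeas j i), setLIntegral_one,
          Measure.restrict_apply (hBmeas j i)]
      calc P (B j 0 ∩ {ω | N j ω = m})
          = ((m : ℝ≥0∞))⁻¹ * ((m : ℝ≥0∞) * P (B j 0 ∩ {ω | N j ω = m})) := by
            rw [← mul_assoc, ENNReal.inv_mul_cancel
              (Nat.cast_ne_zero.2 hmpos.ne') (ENNReal.natCast_ne_top m), one_mul]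
        _ = ((m : ℝ≥0∞))⁻¹ * ∑ i ∈ Finset.range m,
            ∫⁻ ω in {ω | N j ω = m}, (B j i).indicator (fun _ => (1 : ℝ≥0∞)) ω ∂P := by
            congr 1
            rw [Finset.sum_congr rfl fun i hi => (hint i).trans
              (hBm m i (Finset.mem_range.1 hi)), Finset.sum_const, Finset.card_range,
              nsmul_eq_mul]
  -- assembly
  have hcard : J.card = T := by
    rw [hJdef, Nat.card_Ico]
    omega
  have key : P (B K 0) = (T : ℝ≥0∞)⁻¹ * ∑ j ∈ J, P (B j 0) := by
    rw [Finset.sum_congr rfl stepA, Finset.sum_const, hcard, nsmul_eq_mul, ← mul_assoc,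
      ENNReal.inv_mul_cancel (Nat.cast_ne_zero.2 (by omega : T ≠ 0))
        (ENNReal.natCast_ne_top T), one_mul]
  have key2 : P (B K 0) = ∫⁻ ω, (T : ℝ≥0∞)⁻¹ * ∑ j ∈ J, h j ω ∂P := by
    rw [key, Finset.sum_congr rfl hjint,
      ← lintegral_finset_sum J fun j _ => hhmeas j,
      ← lintegral_const_mul _ (Finset.measurable_sum J fun j _ => hhmeas j)]
  have hae : ∀ᵐ ω ∂P, (T : ℝ≥0∞)⁻¹ * ∑ j ∈ J, h j ω
      ≤ ENNReal.ofReal (1 - α + (1 + α) / T) := by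
    filter_upwards [hdist] with ω hω
    have hcards : ∀ j ∈ J, h j ω = ((N j ω : ℝ≥0∞))⁻¹ *
        (((Finset.range (N j ω)).filter fun i =>
          pcPhi K K₀ A j i (hierData (K + 1) N Z ω) < ENNReal.ofReal (1 - α)).card : ℝ≥0∞) := by
      intro j hj
      rw [hhdef, Finset.card_filter]
      push_cast [apply_ite (Nat.cast : ℕ → ℝ≥0∞)]
      refine congrArg _ (Finset.sum_congr rfl fun i _ => ?_)
      rw [Set.indicator_apply]
      rfl
    rw [Finset.sum_congr rfl hcards]
    refine det_lemma T hT2 J (fun k => N k ω) (fun j _ => hN j ω)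
      (fun k i => A (hierData K₀ N Z ω) (Z k i ω)) ?_ α hα₁
      (fun j i => pcPhi K K₀ A j i (hierData (K + 1) N Z ω)) ?_
    · intro j hj j' hj' hne i hi i' hi'
      rw [hJdef, Finset.mem_Ico] at hj hj'
      exact hω j j' hj.1 (by omega) hj'.1 (by omega) hne i hi i' hi'
    · intro j hj i
      rw [hJdef, Finset.mem_Ico] at hj
      show pcPhi K K₀ A j i (hierData (K + 1) N Z ω) = _
      rw [pcPhi_hierData ω j i hK₀1 (by omega)]
      have hT1 : (T - 1 : ℕ) = (K - K₀ : ℕ) := by omega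
      rw [hT1, hJdef]
  calc P {ω | (A (hierData K₀ N Z ω) (Z K 0 ω) : EReal)
        ≤ poolThreshold α K₀ K (fun k => N k ω)
            fun k i => A (hierData K₀ N Z ω) (Z k i ω)}
      ≤ P (B K 0) := step0
    _ = ∫⁻ ω, (T : ℝ≥0∞)⁻¹ * ∑ j ∈ J, h j ω ∂P := key2
    _ ≤ ∫⁻ _, ENNReal.ofReal (1 - α + (1 + α) / T) ∂P := lintegral_mono_ae hae
    _ = ENNReal.ofReal (1 - α + (1 + α) / T) := by
        rw [lintegral_const, measure_univ, mul_one]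
    _ = ENNReal.ofReal (1 - α + (1 + α) / (((K - K₀ : ℕ) : ℝ) + 1)) := by
        congr 2
        rw [hTdef]
        push_cast
        ring
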